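/- If G' is a (K_8, K_{2,2,2,2,2}, 5)-cockade and G is obtained from G' by adding a new vertex adjacent to at least six vertices of G', then G contains a K_9^= minor. -/

import Mathlib

open SimpleGraph

/-- The complete 5-partite graph `K_{2,2,2,2,2}`. -/
abbrev K22222 : SimpleGraph (Σ _ : Fin 5, Fin 2) :=
  SimpleGraph.completeMultipartiteGraph fun _ => Fin 2

/-- An `(H₁, H₂, k)`-cockade: any graph isomorphic to `H₁` or `H₂` is one, and identifying
cliques of size `k` in two cockades yields one (expressed via a decomposition of the glued
graph into the two overlapping pieces). -/
inductive IsCockade {α β : Type} (H₁ : SimpleGraph α) (H₂ : SimpleGraph β) (k : ℕ) :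
    {V : Type} → SimpleGraph V → Prop
  | base₁ {V : Type} (G : SimpleGraph V) : Nonempty (G ≃g H₁) → IsCockade H₁ H₂ k G
  | base₂ {V : Type} (G : SimpleGraph V) : Nonempty (G ≃g H₂) → IsCockade H₁ H₂ k G
  | glue {V : Type} (G : SimpleGraph V) (A B : Set V) :
      A ∪ B = Set.univ → ¬ A ⊆ B → ¬ B ⊆ A →
      (A ∩ B).ncard = k → G.IsClique (A ∩ B) →
      (∀ u ∈ A \ B, ∀ v ∈ B \ A, ¬ G.Adj u v) →
      IsCockade H₁ H₂ k (G.induce A) → IsCockade H₁ H₂ k (G.induce B) →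
      IsCockade H₁ H₂ k G

/-- A `(K₈, K_{2,2,2,2,2}, 5)`-cockade. -/
abbrev Cockade85 {V : Type} (G : SimpleGraph V) : Prop :=
  IsCockade (⊤ : SimpleGraph (Fin 8)) K22222 5 G

/-- `H` is a minor of `G`, via branch sets. -/
def IsMinorOf {W V : Type} (H : SimpleGraph W) (G : SimpleGraph V) : Prop :=
  ∃ B : W → Set V,
    (∀ w, (B w).Nonempty) ∧
    (∀ w, (G.induce (B w)).Connected) ∧
    (Pairwise fun w₁ w₂ => Disjoint (B w₁) (B w₂)) ∧
    (∀ w₁ w₂, H.Adj w₁ w₂ → ∃ u ∈ B w₁, ∃ v ∈ B w₂, G.Adj u v)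

/-- `G` contains `K_t` minus two edges as a minor (either of the two nonisomorphic graphs). -/
def HasKEqMinor (t : ℕ) {V : Type} (G : SimpleGraph V) : Prop :=
  ∃ e₁ e₂ : Sym2 (Fin t), e₁ ≠ e₂ ∧ ¬ e₁.IsDiag ∧ ¬ e₂.IsDiag ∧
    IsMinorOf ((⊤ : SimpleGraph (Fin t)).deleteEdges {e₁, e₂}) G


/-- Add to `G` a new vertex (the `none` vertex) adjacent exactly to the vertices in `N`. -/
def addVertex {V : Type} (G : SimpleGraph V) (N : Set V) : SimpleGraph (Option V) where
  Adj a b :=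
    match a, b with
    | some u, some w => G.Adj u w
    | some u, none => u ∈ N
    | none, some w => w ∈ N
    | none, none => False
  symm := ⟨by rintro (_ | u) (_ | w) h <;> first | exact h | exact h.symm⟩
  loopless := ⟨by
    rintro (_ | u) h
    · exact h
    · exact G.loopless.irrefl u h⟩

/-- The graph obtained from `G` by contracting the edge `xy` (the merged vertex is `x`,
and `y` is deleted). -/
def contractEdge {V : Type} (G : SimpleGraph V) (x y : V) :
    SimpleGraph {z : V // z ≠ y} where
  Adj a b := a ≠ b ∧
    (G.Adj a b ∨ ((a : V) = x ∧ G.Adj y b) ∨ ((b : V) = x ∧ G.Adj y a))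
  symm := ⟨by
    rintro a b ⟨hne, h⟩
    refine ⟨hne.symm, ?_⟩
    rcases h with h | ⟨h1, h2⟩ | ⟨h1, h2⟩
    · exact Or.inl h.symm
    · exact Or.inr (Or.inr ⟨h1, h2⟩)
    · exact Or.inr (Or.inl ⟨h1, h2⟩)⟩
  loopless := ⟨fun a h => h.1 rfl⟩

/-- The join of two graphs. -/
def joinGraph {α β : Type} (G : SimpleGraph α) (H : SimpleGraph β) : SimpleGraph (α ⊕ β) where
  Adj a b :=
    match a, b with
    | .inl a, .inl b => G.Adj a b
    | .inr a, .inr b => H.Adj a b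
    | .inl _, .inr _ => True
    | .inr _, .inl _ => True
  symm := ⟨by rintro (a | a) (b | b) h <;> first | exact h.symm | trivial⟩
  loopless := ⟨by rintro (a | a) h; exacts [G.loopless.irrefl a h, H.loopless.irrefl a h]⟩

/-- The disjoint union of two graphs. -/
def disjUnionGraph {α β : Type} (G : SimpleGraph α) (H : SimpleGraph β) :
    SimpleGraph (α ⊕ β) where
  Adj a b :=
    match a, b with
    | .inl a, .inl b => G.Adj a b
    | .inr a, .inr b => H.Adj a b
    | .inl _, .inr _ => False
    | .inr _, .inl _ => False
  symm := ⟨by rintro (a | a) (b | b) h <;> first | exact h.symm | exact h⟩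
  loopless := ⟨by rintro (a | a) h; exacts [G.loopless.irrefl a h, H.loopless.irrefl a h]⟩

/-- The cycle graph `C_n` on `ZMod n`. -/
def cycleG (n : ℕ) [NeZero n] : SimpleGraph (ZMod n) :=
  SimpleGraph.fromRel fun i j => i - j = 1

/-- The Petersen graph, as the Kneser graph on 2-element subsets of a 5-element set. -/
def petersen : SimpleGraph {s : Finset (Fin 5) // s.card = 2} where
  Adj a b := Disjoint a.1 b.1
  symm := ⟨fun _ _ h => h.symm⟩
  loopless := ⟨by
    intro a h
    have h2 := a.2
    rw [disjoint_self.mp h] at h2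
    simp at h2⟩

/-- `G` is `k`-connected: more than `k` vertices, and removing fewer than `k` vertices
leaves a connected graph. -/
def IsKConnected {V : Type} [Fintype V] (k : ℕ) (G : SimpleGraph V) : Prop :=
  k < Fintype.card V ∧ ∀ S : Set V, S.ncard < k → (G.induce Sᶜ).Connected

/-- `G - v` has a `K₄` minor rooted at the 4-element set `T` (with `v ∉ T`): four disjoint
branch sets avoiding `v`, each inducing a connected subgraph, each meeting `T` in exactly
one vertex, and pairwise joined by an edge. -/
def HasRootedK4MinorAvoiding {V : Type} (G : SimpleGraph V) (T : Set V) (v : V) : Prop :=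
  ∃ (t : Fin 4 → V) (B : Fin 4 → Set V),
    Function.Injective t ∧ Set.range t = T ∧
    (∀ i, v ∉ B i) ∧ (∀ i, B i ∩ T = {t i}) ∧
    (∀ i, (G.induce (B i)).Connected) ∧
    (Pairwise fun i j => Disjoint (B i) (B j)) ∧
    (Pairwise fun i j => ∃ a ∈ B i, ∃ b ∈ B j, G.Adj a b)



section Infra

open SimpleGraph

variable {V W ι : Type}

@[simp] lemma addVertex_adj_some_some {G : SimpleGraph V} {N : Set V} {u w : V} :
    (addVertex G N).Adj (some u) (some w) ↔ G.Adj u w := Iff.rfl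

@[simp] lemma addVertex_adj_none_some {G : SimpleGraph V} {N : Set V} {w : V} :
    (addVertex G N).Adj none (some w) ↔ w ∈ N := Iff.rfl

@[simp] lemma addVertex_adj_some_none {G : SimpleGraph V} {N : Set V} {u : V} :
    (addVertex G N).Adj (some u) none ↔ u ∈ N := Iff.rfl

@[simp] lemma addVertex_adj_none_none {G : SimpleGraph V} {N : Set V} :
    ¬ (addVertex G N).Adj none none := fun h => h

lemma induce_singleton_connected (G : SimpleGraph V) (v : V) :
    (G.induce {v}).Connected := by
  have : Nonempty ({v} : Set V) := ⟨⟨v, rfl⟩⟩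
  constructor
  rintro ⟨a, ha⟩ ⟨b, hb⟩
  simp only [Set.mem_singleton_iff] at ha hb
  subst ha; subst hb
  rfl

/-- image of a connected induced set under an adjacency-preserving map is connected -/
lemma connected_image {G : SimpleGraph V} {G' : SimpleGraph W} {s : Set V} (f : V → W)
    (hf : ∀ a ∈ s, ∀ b ∈ s, G.Adj a b → G'.Adj (f a) (f b))
    (hc : (G.induce s).Connected) : (G'.induce (f '' s)).Connected := by
  let hhom : G.induce s →g G'.induce (f '' s) :=
    ⟨fun x => ⟨f x.1, ⟨x.1, x.2, rfl⟩⟩, by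
      rintro ⟨a, ha⟩ ⟨b, hb⟩ hab
      exact hf a ha b hb hab⟩
  refine hc.map hhom ?_
  rintro ⟨w, ⟨a, ha, rfl⟩⟩
  exact ⟨⟨a, ha⟩, rfl⟩

/-- inclusion homomorphism between induced subgraphs -/
def inclHom (G : SimpleGraph V) {s t : Set V} (h : s ⊆ t) : G.induce s →g G.induce t :=
  ⟨fun x => ⟨x.1, h x.2⟩, fun hab => hab⟩

lemma chain_connected (G : SimpleGraph V) (K : SimpleGraph ι) (S : Set ι) (B : ι → Set V)
    (hS : (K.induce S).Connected)
    (hBne : ∀ i ∈ S, (B i).Nonempty)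
    (hBc : ∀ i ∈ S, (G.induce (B i)).Connected)
    (hadj : ∀ i ∈ S, ∀ j ∈ S, K.Adj i j → ∃ a ∈ B i, ∃ b ∈ B j, G.Adj a b) :
    (G.induce (⋃ i ∈ S, B i)).Connected := by
  set U : Set V := ⋃ i ∈ S, B i with hU
  have hsub : ∀ i ∈ S, B i ⊆ U := fun i hi x hx => Set.mem_biUnion hi hx
  have hsame : ∀ i (hi : i ∈ S), ∀ u (hu : u ∈ B i), ∀ v (hv : v ∈ B i),
      (G.induce U).Reachable ⟨u, hsub i hi hu⟩ ⟨v, hsub i hi hv⟩ := by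
    intro i hi u hu v hv
    exact ((hBc i hi).preconnected ⟨u, hu⟩ ⟨v, hv⟩).map (inclHom G (hsub i hi))
  have key : ∀ (a c : ↥(S : Set ι)), (K.induce S).Walk a c →
      ∀ u (hu : u ∈ B a.1), ∀ v (hv : v ∈ B c.1),
      (G.induce U).Reachable ⟨u, hsub _ a.2 hu⟩ ⟨v, hsub _ c.2 hv⟩ := by
    intro a c p
    induction p with
    | @nil d => exact fun u hu v hv => hsame _ d.2 u hu v hv
    | @cons a b c hab p ih =>
      intro u hu v hv
      obtain ⟨x, hx, y, hy, hxy⟩ := hadj a.1 a.2 b.1 b.2 hab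
      have r1 := hsame _ a.2 u hu x hx
      have r2 : (G.induce U).Adj ⟨x, hsub _ a.2 hx⟩ ⟨y, hsub _ b.2 hy⟩ := hxy
      exact (r1.trans r2.reachable).trans (ih y hy v hv)
  have hne : U.Nonempty := by
    obtain ⟨⟨i0, hi0⟩⟩ := hS.nonempty
    obtain ⟨u0, hu0⟩ := hBne i0 hi0
    exact ⟨u0, hsub _ hi0 hu0⟩
  have : Nonempty ↥U := hne.to_subtype
  constructor
  rintro ⟨u, hu⟩ ⟨v, hv⟩
  obtain ⟨i, hi, hui⟩ : ∃ i ∈ S, u ∈ B i := by simpa [hU] using hu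
  obtain ⟨j, hj, hvj⟩ : ∃ j ∈ S, v ∈ B j := by simpa [hU] using hv
  obtain ⟨p⟩ := hS.preconnected ⟨i, hi⟩ ⟨j, hj⟩
  exact key _ _ p u hui v hvj

lemma IsMinorOf.trans {U₀ : Type} {H : SimpleGraph U₀} {K : SimpleGraph W} {G : SimpleGraph V}
    (h1 : IsMinorOf H K) (h2 : IsMinorOf K G) : IsMinorOf H G := by
  obtain ⟨P, hPne, hPc, hPd, hPadj⟩ := h1
  obtain ⟨Q, hQne, hQc, hQd, hQadj⟩ := h2
  refine ⟨fun w => ⋃ k ∈ P w, Q k, ?_, ?_, ?_, ?_⟩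
  · intro w
    obtain ⟨k, hk⟩ := hPne w
    obtain ⟨v, hv⟩ := hQne k
    exact ⟨v, Set.mem_biUnion hk hv⟩
  · intro w
    exact chain_connected G K (P w) Q (hPc w) (fun i _ => hQne i) (fun i _ => hQc i)
      (fun i _ j _ hij => hQadj i j hij)
  · intro w₁ w₂ hne
    rw [Set.disjoint_left]
    rintro v hv1 hv2
    obtain ⟨k₁, hk₁, hvk₁⟩ : ∃ k ∈ P w₁, v ∈ Q k := by simpa using hv1
    obtain ⟨k₂, hk₂, hvk₂⟩ : ∃ k ∈ P w₂, v ∈ Q k := by simpa using hv2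
    have hk12 : k₁ ≠ k₂ := fun h => (Set.disjoint_left.mp (hPd hne)) hk₁ (h ▸ hk₂)
    exact (Set.disjoint_left.mp (hQd hk12)) hvk₁ hvk₂
  · intro w₁ w₂ hadj
    obtain ⟨k₁, hk₁, k₂, hk₂, hkadj⟩ := hPadj w₁ w₂ hadj
    obtain ⟨a, ha, b, hb, hab⟩ := hQadj k₁ k₂ hkadj
    exact ⟨a, Set.mem_biUnion hk₁ ha, b, Set.mem_biUnion hk₂ hb, hab⟩

lemma isMinorOf_of_injHom {G' : SimpleGraph W} {G : SimpleGraph V} (f : W → V)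
    (hinj : Function.Injective f) (hadj : ∀ a b, G'.Adj a b → G.Adj (f a) (f b)) :
    IsMinorOf G' G := by
  refine ⟨fun w => {f w}, fun w => ⟨f w, rfl⟩, fun w => induce_singleton_connected G (f w),
    ?_, ?_⟩
  · intro a b hne
    simp only [Set.disjoint_singleton_left, Set.mem_singleton_iff]
    exact fun h => hne (hinj h)
  · intro a b h
    exact ⟨f a, rfl, f b, rfl, hadj a b h⟩

lemma HasKEqMinor.of_minor {t : ℕ} {G₁ : SimpleGraph W} {G₂ : SimpleGraph V}
    (h : HasKEqMinor t G₁) (hm : IsMinorOf G₁ G₂) : HasKEqMinor t G₂ := by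
  obtain ⟨e₁, e₂, h1, h2, h3, hmin⟩ := h
  exact ⟨e₁, e₂, h1, h2, h3, hmin.trans hm⟩

lemma cockade_finite {G : SimpleGraph V} (h : Cockade85 G) : Finite V := by
  induction h with
  | base₁ G hiso => exact Finite.of_equiv (Fin 8) (Classical.choice hiso).toEquiv.symm
  | base₂ G hiso => exact Finite.of_equiv _ (Classical.choice hiso).toEquiv.symm
  | glue G A B hun _ _ _ _ _ _ _ ihA ihB =>
    rw [← Set.finite_univ_iff, ← hun]
    exact Set.Finite.union (Set.toFinite A) (Set.toFinite B)

lemma ncard_preimage_val (A s : Set V) (h : s ⊆ A) :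
    (Subtype.val ⁻¹' s : Set ↥A).ncard = s.ncard := by
  apply Set.ncard_preimage_of_injective_subset_range Subtype.coe_injective
  rwa [Subtype.range_coe]

lemma clique_preimage {G : SimpleGraph V} {C : Set V} (A : Set V) (h : G.IsClique C) :
    (G.induce A).IsClique (Subtype.val ⁻¹' C : Set ↥A) := by
  intro x hx y hy hne
  exact h hx hy (fun hc => hne (Subtype.coe_injective hc))

lemma K22222_adj_iff (a b : Σ _ : Fin 5, Fin 2) : K22222.Adj a b ↔ a.1 ≠ b.1 := Iff.rfl

/-- In `K22222`, given any 5-element-or-fewer forbidden set and a part `j`,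
there is a vertex outside the forbidden set whose part is not `j`. -/
lemma exists_other_part {G : SimpleGraph V} (φ : G ≃g K22222) (S : Set V)
    (hS : S.ncard ≤ 5) (j : Fin 5) : ∃ u, u ∉ S ∧ (φ u).1 ≠ j := by
  have : Finite V := Finite.of_equiv _ φ.toEquiv.symm
  by_contra hcon
  push_neg at hcon
  set T' : Set (Σ _ : Fin 5, Fin 2) := {p | p.1 ≠ j} with hT'
  have hsub : (φ.toEquiv ⁻¹' T' : Set V) ⊆ S := by
    intro u hu
    by_contra hus
    exact hu (hcon u hus)
  have hcard : (φ.toEquiv ⁻¹' T' : Set V).ncard = T'.ncard := by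
    apply Set.ncard_preimage_of_injective_subset_range φ.toEquiv.injective
    rw [Equiv.range_eq_univ]
    exact Set.subset_univ _
  have hcompl : T'ᶜ ⊆ {(⟨j, 0⟩ : Σ _ : Fin 5, Fin 2), ⟨j, 1⟩} := by
    rintro ⟨i, e⟩ hp
    simp only [hT', Set.mem_compl_iff, Set.mem_setOf_eq, not_not] at hp
    subst hp
    fin_cases e <;> simp
  have h2 : T'ᶜ.ncard ≤ 2 := by
    calc T'ᶜ.ncard ≤ ({(⟨j, 0⟩ : Σ _ : Fin 5, Fin 2), ⟨j, 1⟩} : Set _).ncard :=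
          Set.ncard_le_ncard hcompl (Set.toFinite _)
      _ ≤ 2 := by
          apply le_trans (Set.ncard_insert_le _ _)
          simp
  have h10 : T'.ncard + T'ᶜ.ncard = 10 := by
    rw [Set.ncard_add_ncard_compl]
    simp [Nat.card_eq_fintype_card]
  have h8 : 8 ≤ T'.ncard := by omega
  have := Set.ncard_le_ncard hsub (Set.toFinite S)
  omega

/-- Cockades are "5-connected": after removing at most 4 vertices, any two remaining
vertices lie in a common connected set avoiding the removed ones. -/
lemma cockade_conn {G : SimpleGraph V} (h : Cockade85 G) :
    ∀ S : Set V, S.ncard ≤ 4 → ∀ w, w ∉ S → ∀ d, d ∉ S →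
    ∃ Y : Set V, w ∈ Y ∧ d ∈ Y ∧ Y ∩ S = ∅ ∧ (G.induce Y).Connected := by
  induction h with
  | base₁ G hiso =>
    obtain ⟨φ⟩ := hiso
    intro S _ w hw d hd
    refine ⟨{w, d}, by simp, by simp, ?_, ?_⟩
    · ext x
      simp only [Set.mem_inter_iff, Set.mem_insert_iff, Set.mem_singleton_iff,
        Set.mem_empty_iff_false, iff_false, not_and]
      rintro (rfl | rfl) <;> assumption
    · rcases eq_or_ne w d with rfl | hne
      · rw [Set.pair_eq_singleton]; exact induce_singleton_connected G w
      · refine SimpleGraph.induce_pair_connected_of_adj ?_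
        have : (⊤ : SimpleGraph (Fin 8)).Adj (φ w) (φ d) := by
          simp [φ.toEquiv.injective.ne_iff, hne]
        exact φ.map_adj_iff.mp this
  | @base₂ V' G hiso =>
    obtain ⟨φ⟩ := hiso
    intro S hS w hw d hd
    have hVfin : Finite V' := Finite.of_equiv _ φ.toEquiv.symm
    rcases eq_or_ne w d with rfl | hne
    · refine ⟨{w}, rfl, rfl, ?_, induce_singleton_connected G w⟩
      ext x
      simp only [Set.mem_inter_iff, Set.mem_singleton_iff, Set.mem_empty_iff_false, iff_false,
        not_and]
      rintro rfl; assumption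
    by_cases hadj : G.Adj w d
    · refine ⟨{w, d}, by simp, by simp, ?_, SimpleGraph.induce_pair_connected_of_adj hadj⟩
      ext x
      simp only [Set.mem_inter_iff, Set.mem_insert_iff, Set.mem_singleton_iff,
        Set.mem_empty_iff_false, iff_false, not_and]
      rintro (rfl | rfl) <;> assumption
    · -- same part
      have hpart : (φ w).1 = (φ d).1 := by
        by_contra hp
        exact hadj (φ.map_adj_iff.mp hp)
      obtain ⟨u, huS, hup⟩ := exists_other_part φ S (le_trans hS (by norm_num)) (φ w).1
      have hwu : G.Adj w u := by
        refine φ.map_adj_iff.mp ?_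
        exact fun hh => hup hh.symm
      have hud : G.Adj u d := by
        refine φ.map_adj_iff.mp ?_
        rw [K22222_adj_iff]
        rw [← hpart]
        exact hup
      refine ⟨{w, u} ∪ {u, d}, by simp, by simp, ?_, ?_⟩
      · ext x
        simp only [Set.mem_inter_iff, Set.mem_union, Set.mem_insert_iff, Set.mem_singleton_iff,
          Set.mem_empty_iff_false, iff_false, not_and]
        rintro ((rfl | rfl) | (rfl | rfl)) <;> assumption
      · refine SimpleGraph.induce_union_connected (SimpleGraph.induce_pair_connected_of_adj hwu).preconnected
          (SimpleGraph.induce_pair_connected_of_adj hud).preconnected ⟨u, by simp⟩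
  | @glue V' G A B hun hab hba hcard hclq hnoadj hA hB ihA ihB =>
    intro S hS w hw d hd
    have : Finite ↥A := cockade_finite hA
    have : Finite ↥B := cockade_finite hB
    have hfin : Finite V' := by
      rw [← Set.finite_univ_iff, ← hun]
      exact (Set.toFinite A).union (Set.toFinite B)
    have hABne : ((A ∩ B) \ S).Nonempty := by
      rw [Set.diff_nonempty]
      intro hsub
      have := Set.ncard_le_ncard hsub (Set.toFinite S)
      rw [hcard] at this
      omega
    obtain ⟨e, heAB, heS⟩ := hABne
    -- from any vertex not in S, find a connected piece containing it and e
    have side : ∀ x, x ∉ S → ∃ Y : Set V', x ∈ Y ∧ e ∈ Y ∧ Y ∩ S = ∅ ∧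
        (G.induce Y).Connected := by
      intro x hx
      have hx' : x ∈ A ∪ B := hun ▸ Set.mem_univ x
      have key : ∀ (D : Set V'), x ∈ D → e ∈ D →
          (∀ S' : Set ↥D, S'.ncard ≤ 4 → ∀ w' , w' ∉ S' → ∀ d', d' ∉ S' →
            ∃ Y' : Set ↥D, w' ∈ Y' ∧ d' ∈ Y' ∧ Y' ∩ S' = ∅ ∧
              ((G.induce D).induce Y').Connected) →
          ∃ Y : Set V', x ∈ Y ∧ e ∈ Y ∧ Y ∩ S = ∅ ∧ (G.induce Y).Connected := by
        intro D hxD heD ih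
        obtain ⟨Y', hxY', heY', hYS', hYc'⟩ := ih (Subtype.val ⁻¹' (S ∩ D)) (by
            rw [Set.ncard_preimage_of_injective_subset_range Subtype.coe_injective
              (by rw [Subtype.range_coe]; exact Set.inter_subset_right)]
            exact le_trans (Set.ncard_le_ncard Set.inter_subset_left (Set.toFinite S)) hS)
          ⟨x, hxD⟩ (by simp [hx]) ⟨e, heD⟩ (by simp [heS])
        refine ⟨Subtype.val '' Y', ⟨⟨x, hxD⟩, hxY', rfl⟩, ⟨⟨e, heD⟩, heY', rfl⟩, ?_, ?_⟩
        · ext z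
          simp only [Set.mem_inter_iff, Set.mem_image, Set.mem_empty_iff_false, iff_false,
            not_and]
          rintro ⟨⟨z', hz'⟩, hzY', rfl⟩ hzS
          have : (⟨z', hz'⟩ : ↥D) ∈ Y' ∩ (Subtype.val ⁻¹' (S ∩ D)) := ⟨hzY', hzS, hz'⟩
          rw [hYS'] at this
          exact this
        · exact connected_image Subtype.val (fun a _ b _ hab => hab) hYc'
      rcases hx' with hxA | hxB
      · exact key A hxA heAB.1 ihA
      · exact key B hxB heAB.2 ihB
    obtain ⟨Y₁, hwY₁, heY₁, hY₁S, hY₁c⟩ := side w hw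
    obtain ⟨Y₂, hdY₂, heY₂, hY₂S, hY₂c⟩ := side d hd
    refine ⟨Y₁ ∪ Y₂, Or.inl hwY₁, Or.inr hdY₂, ?_, ?_⟩
    · rw [Set.union_inter_distrib_right, hY₁S, hY₂S, Set.union_empty]
    · exact SimpleGraph.induce_union_connected hY₁c.preconnected hY₂c.preconnected ⟨e, heY₁, heY₂⟩

/-- Routing lemma: in a cockade, from any vertex outside a 5-clique `C` one can reach a
connected set avoiding `C` which has a neighbour at every vertex of `C`. -/
lemma cockade_route {G : SimpleGraph V} (h : Cockade85 G) :
    ∀ C : Set V, G.IsClique C → C.ncard = 5 → ∀ w, w ∉ C →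
    ∃ X : Set V, w ∈ X ∧ X ∩ C = ∅ ∧ (G.induce X).Connected ∧
      ∀ c ∈ C, ∃ x ∈ X, G.Adj x c := by
  induction h with
  | @base₁ V' G hiso =>
    obtain ⟨φ⟩ := hiso
    intro C hC hC5 w hw
    refine ⟨{w}, rfl, ?_, induce_singleton_connected G w, ?_⟩
    · ext x
      simp only [Set.mem_inter_iff, Set.mem_singleton_iff, Set.mem_empty_iff_false, iff_false,
        not_and]
      rintro rfl; exact hw
    · intro c hc
      refine ⟨w, rfl, φ.map_adj_iff.mp ?_⟩
      have : w ≠ c := fun h => hw (h ▸ hc)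
      simp [φ.toEquiv.injective.ne_iff, this]
  | @base₂ V' G hiso =>
    obtain ⟨φ⟩ := hiso
    intro C hC hC5 w hw
    obtain ⟨u, huC, hup⟩ := exists_other_part φ C (le_of_eq hC5) (φ w).1
    have hwu : G.Adj w u := φ.map_adj_iff.mp (fun hh => hup hh.symm)
    refine ⟨{w, u}, by simp, ?_, SimpleGraph.induce_pair_connected_of_adj hwu, ?_⟩
    · ext x
      simp only [Set.mem_inter_iff, Set.mem_insert_iff, Set.mem_singleton_iff,
        Set.mem_empty_iff_false, iff_false, not_and]
      rintro (rfl | rfl) <;> assumption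
    · intro c hc
      by_cases hcw : (φ c).1 = (φ w).1
      · exact ⟨u, by simp, φ.map_adj_iff.mp (by rw [K22222_adj_iff, hcw]; exact hup)⟩
      · exact ⟨w, by simp, φ.map_adj_iff.mp (by rw [K22222_adj_iff]; exact fun h => hcw h.symm)⟩
  | @glue V' G A B hun hab hba hcard hclq hnoadj hA hB ihA ihB =>
    intro C hC hC5 w hw
    have : Finite ↥A := cockade_finite hA
    have : Finite ↥B := cockade_finite hB
    have hfin : Finite V' := by
      rw [← Set.finite_univ_iff, ← hun]
      exact (Set.toFinite A).union (Set.toFinite B)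
    -- the clique C lies inside one of the two sides
    have hCside : C ⊆ A ∨ C ⊆ B := by
      by_contra hcon
      push_neg at hcon
      obtain ⟨hCA, hCB⟩ := hcon
      obtain ⟨a, haC, haA⟩ := Set.not_subset.mp hCA
      obtain ⟨b, hbC, hbB⟩ := Set.not_subset.mp hCB
      have haB : a ∈ B := (hun ▸ Set.mem_univ a : a ∈ A ∪ B).resolve_left haA
      have hbA : b ∈ A := (hun ▸ Set.mem_univ b : b ∈ A ∪ B).resolve_right hbB
      have hne : b ≠ a := fun h => haA (h ▸ hbA)
      exact hnoadj b ⟨hbA, hbB⟩ a ⟨haB, haA⟩ (hC hbC haC hne)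
    -- from a vertex on the same side as C
    have fromSide : ∀ (D : Set V'),
        (∀ C' : Set ↥D, (G.induce D).IsClique C' → C'.ncard = 5 → ∀ w' ∉ C',
          ∃ X' : Set ↥D, w' ∈ X' ∧ X' ∩ C' = ∅ ∧ ((G.induce D).induce X').Connected ∧
            ∀ c ∈ C', ∃ x ∈ X', (G.induce D).Adj x c) →
        C ⊆ D → ∀ w₀ ∈ D, w₀ ∉ C →
        ∃ X : Set V', w₀ ∈ X ∧ X ∩ C = ∅ ∧ (G.induce X).Connected ∧
          ∀ c ∈ C, ∃ x ∈ X, G.Adj x c := by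
      intro D ihD hCD w₀ hw₀D hw₀C
      obtain ⟨X', hwX', hXC', hXc', hXadj'⟩ := ihD (Subtype.val ⁻¹' C)
        (clique_preimage D hC) (by rw [ncard_preimage_val D C hCD]; exact hC5)
        ⟨w₀, hw₀D⟩ (by simpa using hw₀C)
      refine ⟨Subtype.val '' X', ⟨⟨w₀, hw₀D⟩, hwX', rfl⟩, ?_, ?_, ?_⟩
      · ext z
        simp only [Set.mem_inter_iff, Set.mem_image, Set.mem_empty_iff_false, iff_false,
          not_and]
        rintro ⟨⟨z', hz'⟩, hzX', rfl⟩ hzC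
        have : (⟨z', hz'⟩ : ↥D) ∈ X' ∩ (Subtype.val ⁻¹' C) := ⟨hzX', hzC⟩
        rw [hXC'] at this
        exact this
      · exact connected_image Subtype.val (fun a _ b _ hab => hab) hXc'
      · intro c hc
        obtain ⟨x', hx', hadj⟩ := hXadj' ⟨c, hCD hc⟩ (by simpa using hc)
        exact ⟨x'.1, ⟨x', hx', rfl⟩, hadj⟩
    -- main symmetric argument
    have main : ∀ (P Q : Set V'), P ∪ Q = Set.univ → (P ∩ Q).ncard = 5 →
        Cockade85 (G.induce Q) →
        (∀ C' : Set ↥P, (G.induce P).IsClique C' → C'.ncard = 5 → ∀ w' ∉ C',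
          ∃ X' : Set ↥P, w' ∈ X' ∧ X' ∩ C' = ∅ ∧ ((G.induce P).induce X').Connected ∧
            ∀ c ∈ C', ∃ x ∈ X', (G.induce P).Adj x c) →
        (∀ C' : Set ↥Q, (G.induce Q).IsClique C' → C'.ncard = 5 → ∀ w' ∉ C',
          ∃ X' : Set ↥Q, w' ∈ X' ∧ X' ∩ C' = ∅ ∧ ((G.induce Q).induce X').Connected ∧
            ∀ c ∈ C', ∃ x ∈ X', (G.induce Q).Adj x c) →
        C ⊆ P →
        ∃ X : Set V', w ∈ X ∧ X ∩ C = ∅ ∧ (G.induce X).Connected ∧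
          ∀ c ∈ C, ∃ x ∈ X, G.Adj x c := by
      intro P Q hun' hcard' hQ ihP ihQ hCP
      by_cases hwP : w ∈ P
      · exact fromSide P ihP hCP w hwP hw
      · have hwQ : w ∈ Q := (hun' ▸ Set.mem_univ w : w ∈ P ∪ Q).resolve_left hwP
        by_cases hPQ : P ∩ Q ⊆ C
        · have hEQ : P ∩ Q = C :=
            Set.eq_of_subset_of_ncard_le hPQ (by rw [hC5, hcard']) (Set.toFinite C)
          have hCQ : C ⊆ Q := hEQ ▸ Set.inter_subset_right
          exact fromSide Q ihQ hCQ w hwQ hw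
        · obtain ⟨d, hdPQ, hdC⟩ := Set.not_subset.mp hPQ
          -- route w to d inside Q avoiding C
          have hS0card : (Subtype.val ⁻¹' C : Set ↥Q).ncard ≤ 4 := by
            have h1 : (Subtype.val ⁻¹' C : Set ↥Q) = Subtype.val ⁻¹' (C ∩ Q) := by
              ext z; simp [z.2]
            rw [h1, ncard_preimage_val Q (C ∩ Q) Set.inter_subset_right]
            have hss : C ∩ Q ⊂ P ∩ Q := by
              constructor
              · exact Set.inter_subset_inter_left Q hCP
              · intro hsub
                exact hdC (hsub hdPQ).1
            have := Set.ncard_lt_ncard hss (Set.toFinite _)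
            omega
          obtain ⟨Y', hwY', hdY', hYS', hYc'⟩ := cockade_conn hQ (Subtype.val ⁻¹' C) hS0card
            ⟨w, hwQ⟩ (by simpa using hw) ⟨d, hdPQ.2⟩ (by simpa using hdC)
          obtain ⟨XP, hdXP, hXPC, hXPc, hXPadj⟩ := fromSide P ihP hCP d hdPQ.1 hdC
          refine ⟨XP ∪ Subtype.val '' Y', Or.inr ⟨⟨w, hwQ⟩, hwY', rfl⟩, ?_, ?_, ?_⟩
          · rw [Set.union_inter_distrib_right, hXPC]
            rw [Set.empty_union]
            ext z
            simp only [Set.mem_inter_iff, Set.mem_image, Set.mem_empty_iff_false, iff_false,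
              not_and]
            rintro ⟨⟨z', hz'⟩, hzY', rfl⟩ hzC
            have : (⟨z', hz'⟩ : ↥Q) ∈ Y' ∩ (Subtype.val ⁻¹' C) := ⟨hzY', hzC⟩
            rw [hYS'] at this
            exact this
          · refine SimpleGraph.induce_union_connected hXPc.preconnected
              (connected_image Subtype.val (fun a _ b _ hab => hab) hYc').preconnected
              ⟨d, hdXP, ⟨⟨d, hdPQ.2⟩, hdY', rfl⟩⟩
          · intro c hc
            obtain ⟨x, hx, hadj⟩ := hXPadj c hc
            exact ⟨x, Or.inl hx, hadj⟩
    rcases hCside with hCA | hCB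
    · exact main A B hun hcard hB ihA ihB hCA
    · refine main B A ?_ ?_ hA ihB ihA hCB
      · rw [Set.union_comm]; exact hun
      · rw [Set.inter_comm]; exact hcard

/-- Base case: `K₈` plus a vertex with 6 neighbours. -/
lemma k8_case {G : SimpleGraph V} (φ : G ≃g (⊤ : SimpleGraph (Fin 8)))
    (N : Set V) (hN : 6 ≤ N.ncard) : HasKEqMinor 9 (addVertex G N) := by
  have hfin : Finite V := Finite.of_equiv _ φ.toEquiv.symm
  have hcardV : Nat.card V = 8 := by
    rw [Nat.card_congr φ.toEquiv]
    simp [Nat.card_eq_fintype_card]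
  obtain ⟨t, htN, ht6⟩ := Set.exists_subset_card_eq hN
  have htc : Nat.card ↥t = 6 := by rw [Nat.card_coe_set_eq, ht6]
  have htcc : Nat.card ↥(tᶜ) = 2 := by
    rw [Nat.card_coe_set_eq]
    have := Set.ncard_add_ncard_compl t
    omega
  let e6 : ↥t ≃ Fin 6 := (Nat.equivFinOfCardPos (by omega)).trans (finCongr htc)
  let e2 : ↥(tᶜ) ≃ Fin 2 := (Nat.equivFinOfCardPos (by omega)).trans (finCongr htcc)
  let x : Fin 8 → V := fun i =>
    if h : (i : ℕ) < 6 then (e6.symm ⟨i, h⟩ : ↥t).1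
    else (e2.symm ⟨(i : ℕ) - 6, by omega⟩ : ↥(tᶜ)).1
  have xmem : ∀ (i : Fin 8) (h : (i : ℕ) < 6), x i ∈ N := by
    intro i h
    simp only [x, dif_pos h]
    exact htN (e6.symm ⟨i, h⟩).2
  have xinj : Function.Injective x := by
    intro i j hij
    by_cases hi : (i : ℕ) < 6 <;> by_cases hj : (j : ℕ) < 6 <;>
      simp only [x, dif_pos, dif_neg, hi, hj] at hij
    · have h2 := e6.symm.injective (Subtype.coe_injective hij)
      have h3 : (i : ℕ) = (j : ℕ) := by simpa using congrArg Fin.val h2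
      exact Fin.ext h3
    · exact absurd ((e6.symm ⟨i, hi⟩).2) (hij ▸ (e2.symm ⟨(j : ℕ) - 6, by omega⟩).2)
    · exact absurd ((e6.symm ⟨j, hj⟩).2) (hij ▸ (e2.symm ⟨(i : ℕ) - 6, by omega⟩).2)
    · have h2 := e2.symm.injective (Subtype.coe_injective hij)
      have h3 : (i : ℕ) - 6 = (j : ℕ) - 6 := congrArg Fin.val h2
      have hi8 : (i : ℕ) < 8 := i.isLt
      have hj8 : (j : ℕ) < 8 := j.isLt
      exact Fin.ext (by omega)
  have xadj : ∀ i j : Fin 8, i ≠ j → G.Adj (x i) (x j) := by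
    intro i j hij
    refine φ.map_adj_iff.mp ?_
    rw [top_adj]
    exact fun h => hij (xinj (φ.toEquiv.injective h))
  let f : Fin 9 → Option V := fun i => if h : (i : ℕ) < 8 then some (x ⟨i, h⟩) else none
  have finj : Function.Injective f := by
    intro i j hij
    by_cases hi : (i : ℕ) < 8 <;> by_cases hj : (j : ℕ) < 8
    · simp only [f, dif_pos hi, dif_pos hj, Option.some.injEq] at hij
      have h2 := xinj hij
      have h3 : (i : ℕ) = (j : ℕ) := by simpa using congrArg Fin.val h2
      exact Fin.ext h3
    · simp [f, hi, hj] at hij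
    · simp [f, hi, hj] at hij
    · have hi9 : (i : ℕ) < 9 := i.isLt
      have hj9 : (j : ℕ) < 9 := j.isLt
      exact Fin.ext (by omega)
  refine ⟨s(6, 8), s(7, 8), by decide, by decide, by decide, ?_⟩
  refine isMinorOf_of_injHom f finj ?_
  intro a b hab
  rw [SimpleGraph.deleteEdges_adj] at hab
  obtain ⟨hne, hmem⟩ := hab
  rw [top_adj] at hne
  simp only [Set.mem_insert_iff, Set.mem_singleton_iff, not_or] at hmem
  obtain ⟨hm1, hm2⟩ := hmem
  by_cases ha : (a : ℕ) < 8 <;> by_cases hb : (b : ℕ) < 8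
  · simp only [f, dif_pos ha, dif_pos hb, addVertex_adj_some_some]
    refine xadj _ _ ?_
    intro h
    exact hne (Fin.ext (congrArg Fin.val h : ((⟨(a : ℕ), ha⟩ : Fin 8) : ℕ) = (b : ℕ)))
  · -- b = 8
    have hb8 : b = 8 := Fin.ext (by have := b.isLt; omega)
    have ha6 : (a : ℕ) < 6 := by
      by_contra hge
      have : (a : ℕ) = 6 ∨ (a : ℕ) = 7 := by omega
      rcases this with h6 | h7
      · exact hm1 (by rw [hb8, show a = 6 from Fin.ext h6])
      · exact hm2 (by rw [hb8, show a = 7 from Fin.ext h7])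
    simp only [f, dif_pos ha, hb8, dif_neg (by decide : ¬((8 : Fin 9) : ℕ) < 8),
      addVertex_adj_some_none]
    exact xmem _ ha6
  · -- a = 8
    have ha8 : a = 8 := Fin.ext (by have := a.isLt; omega)
    have hb6 : (b : ℕ) < 6 := by
      by_contra hge
      have : (b : ℕ) = 6 ∨ (b : ℕ) = 7 := by omega
      rcases this with h6 | h7
      · exact hm1 (by rw [ha8, show b = 6 from Fin.ext h6, Sym2.eq_swap])
      · exact hm2 (by rw [ha8, show b = 7 from Fin.ext h7, Sym2.eq_swap])
    simp only [f, dif_pos hb, ha8, dif_neg (by decide : ¬((8 : Fin 9) : ℕ) < 8),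
      addVertex_adj_none_some]
    exact xmem _ hb6
  · exact absurd (Fin.ext (by have := a.isLt; have := b.isLt; omega) : a = b) hne

/-- Base case: `K_{2,2,2,2,2}` plus a vertex with 6 neighbours. -/
lemma k22222_case {G : SimpleGraph V} (φ : G ≃g K22222)
    (N : Set V) (hN : 6 ≤ N.ncard) : HasKEqMinor 9 (addVertex G N) := by
  have hfin : Finite V := Finite.of_equiv _ φ.toEquiv.symm
  have pigeon : ∃ j : Fin 5, φ.symm ⟨j, 0⟩ ∈ N ∧ φ.symm ⟨j, 1⟩ ∈ N := by
    by_contra hcon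
    push_neg at hcon
    have hinj : Set.InjOn (fun v => (φ v).1) N := by
      intro u hu v hv huv
      by_contra hneuv
      simp only at huv
      have hfne : φ u ≠ φ v := fun h => hneuv (φ.toEquiv.injective h)
      have h2 : (φ u).2 ≠ (φ v).2 := by
        intro h2
        exact hfne (Sigma.ext huv (heq_of_eq h2))
      have key : ∀ e : Fin 2, φ.symm ⟨(φ u).1, e⟩ ∈ N := by
        intro e
        rcases eq_or_ne e ((φ u).2) with rfl | hne2
        · have hh : (⟨(φ u).1, (φ u).2⟩ : Σ _ : Fin 5, Fin 2) = φ u := Sigma.eta _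
          rw [hh]
          have : φ.symm (φ u) = u := φ.toEquiv.symm_apply_apply u
          rwa [this]
        · have hev : e = (φ v).2 :=
            (by decide : ∀ a b c : Fin 2, a ≠ b → c ≠ b → a = c) e (φ u).2 (φ v).2 hne2
              (Ne.symm h2)
          have hh : (⟨(φ u).1, e⟩ : Σ _ : Fin 5, Fin 2) = φ v := by
            rw [huv, hev]
          rw [hh]
          have : φ.symm (φ v) = v := φ.toEquiv.symm_apply_apply v
          rwa [this]
      exact hcon (φ u).1 (key 0) (key 1)
    have himg := Set.ncard_image_of_injOn hinj
    have hle : ((fun v => (φ v).1) '' N).ncard ≤ 5 := by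
      have h1 := Set.ncard_le_ncard (Set.subset_univ ((fun v => (φ v).1) '' N))
        Set.finite_univ
      rwa [Set.ncard_univ, Nat.card_eq_fintype_card, Fintype.card_fin] at h1
    omega
  obtain ⟨j, hj0, hj1⟩ := pigeon
  set q : Equiv.Perm (Fin 5) := Equiv.swap 0 j with hq
  set wv : Fin 5 → Fin 2 → V := fun i e => φ.symm ⟨q i, e⟩ with hwv
  have hwadj : ∀ (i : Fin 5) (e : Fin 2) (i' : Fin 5) (e' : Fin 2),
      G.Adj (wv i e) (wv i' e') ↔ i ≠ i' := by
    intro i e i' e'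
    have h1 : G.Adj (φ.symm ⟨q i, e⟩) (φ.symm ⟨q i', e'⟩) ↔
        K22222.Adj ⟨q i, e⟩ ⟨q i', e'⟩ := φ.symm.map_adj_iff
    exact h1.trans q.injective.ne_iff
  have hwne : ∀ (i : Fin 5) (e : Fin 2) (i' : Fin 5) (e' : Fin 2),
      wv i e = wv i' e' ↔ (i = i' ∧ e = e') := by
    intro i e i' e'
    constructor
    · intro h
      have h2 : (⟨q i, e⟩ : Σ _ : Fin 5, Fin 2) = ⟨q i', e'⟩ := φ.symm.toEquiv.injective h
      obtain ⟨h3, h4⟩ := Sigma.mk.inj_iff.mp h2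
      exact ⟨q.injective h3, eq_of_heq h4⟩
    · rintro ⟨rfl, rfl⟩; rfl
  have hq0 : q 0 = j := Equiv.swap_apply_left 0 j
  have hw00 : wv 0 0 ∈ N := by
    show φ.symm ⟨q 0, 0⟩ ∈ N
    rw [hq0]; exact hj0
  have hw01 : wv 0 1 ∈ N := by
    show φ.symm ⟨q 0, 1⟩ ∈ N
    rw [hq0]; exact hj1
  refine ⟨s(5, 6), s(7, 8), by decide, by decide, by decide,
    ![{none, some (wv 0 0)}, {some (wv 0 1)}, {some (wv 1 0), some (wv 2 1)}, {some (wv 2 0)},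
      {some (wv 1 1)}, {some (wv 3 0)}, {some (wv 3 1)}, {some (wv 4 0)}, {some (wv 4 1)}],
    ?_, ?_, ?_, ?_⟩
  · intro i
    fin_cases i
    · exact Set.insert_nonempty _ _
    · exact Set.singleton_nonempty _
    · exact Set.insert_nonempty _ _
    · exact Set.singleton_nonempty _
    · exact Set.singleton_nonempty _
    · exact Set.singleton_nonempty _
    · exact Set.singleton_nonempty _
    · exact Set.singleton_nonempty _
    · exact Set.singleton_nonempty _
  · intro i
    fin_cases i
    · exact SimpleGraph.induce_pair_connected_of_adj (addVertex_adj_none_some.mpr hw00)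
    · exact induce_singleton_connected _ _
    · exact SimpleGraph.induce_pair_connected_of_adj (addVertex_adj_some_some.mpr ((hwadj 1 0 2 1).mpr (by decide)))
    · exact induce_singleton_connected _ _
    · exact induce_singleton_connected _ _
    · exact induce_singleton_connected _ _
    · exact induce_singleton_connected _ _
    · exact induce_singleton_connected _ _
    · exact induce_singleton_connected _ _
  · intro i j hij
    fin_cases i <;> fin_cases j
    · exact absurd rfl hij
    · show Disjoint ({none, some (wv 0 0)} : Set (Option V)) {some (wv 0 1)}
      simp [Set.disjoint_left, hwne]
    · show Disjoint ({none, some (wv 0 0)} : Set (Option V)) {some (wv 1 0), some (wv 2 1)}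
      simp [Set.disjoint_left, hwne]
    · show Disjoint ({none, some (wv 0 0)} : Set (Option V)) {some (wv 2 0)}
      simp [Set.disjoint_left, hwne]
    · show Disjoint ({none, some (wv 0 0)} : Set (Option V)) {some (wv 1 1)}
      simp [Set.disjoint_left, hwne]
    · show Disjoint ({none, some (wv 0 0)} : Set (Option V)) {some (wv 3 0)}
      simp [Set.disjoint_left, hwne]
    · show Disjoint ({none, some (wv 0 0)} : Set (Option V)) {some (wv 3 1)}
      simp [Set.disjoint_left, hwne]
    · show Disjoint ({none, some (wv 0 0)} : Set (Option V)) {some (wv 4 0)}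
      simp [Set.disjoint_left, hwne]
    · show Disjoint ({none, some (wv 0 0)} : Set (Option V)) {some (wv 4 1)}
      simp [Set.disjoint_left, hwne]
    · show Disjoint ({some (wv 0 1)} : Set (Option V)) {none, some (wv 0 0)}
      simp [Set.disjoint_left, hwne]
    · exact absurd rfl hij
    · show Disjoint ({some (wv 0 1)} : Set (Option V)) {some (wv 1 0), some (wv 2 1)}
      simp [Set.disjoint_left, hwne]
    · show Disjoint ({some (wv 0 1)} : Set (Option V)) {some (wv 2 0)}
      simp [Set.disjoint_left, hwne]
    · show Disjoint ({some (wv 0 1)} : Set (Option V)) {some (wv 1 1)}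
      simp [Set.disjoint_left, hwne]
    · show Disjoint ({some (wv 0 1)} : Set (Option V)) {some (wv 3 0)}
      simp [Set.disjoint_left, hwne]
    · show Disjoint ({some (wv 0 1)} : Set (Option V)) {some (wv 3 1)}
      simp [Set.disjoint_left, hwne]
    · show Disjoint ({some (wv 0 1)} : Set (Option V)) {some (wv 4 0)}
      simp [Set.disjoint_left, hwne]
    · show Disjoint ({some (wv 0 1)} : Set (Option V)) {some (wv 4 1)}
      simp [Set.disjoint_left, hwne]
    · show Disjoint ({some (wv 1 0), some (wv 2 1)} : Set (Option V)) {none, some (wv 0 0)}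
      simp [Set.disjoint_left, hwne]
    · show Disjoint ({some (wv 1 0), some (wv 2 1)} : Set (Option V)) {some (wv 0 1)}
      simp [Set.disjoint_left, hwne]
    · exact absurd rfl hij
    · show Disjoint ({some (wv 1 0), some (wv 2 1)} : Set (Option V)) {some (wv 2 0)}
      simp [Set.disjoint_left, hwne]
    · show Disjoint ({some (wv 1 0), some (wv 2 1)} : Set (Option V)) {some (wv 1 1)}
      simp [Set.disjoint_left, hwne]
    · show Disjoint ({some (wv 1 0), some (wv 2 1)} : Set (Option V)) {some (wv 3 0)}
      simp [Set.disjoint_left, hwne]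
    · show Disjoint ({some (wv 1 0), some (wv 2 1)} : Set (Option V)) {some (wv 3 1)}
      simp [Set.disjoint_left, hwne]
    · show Disjoint ({some (wv 1 0), some (wv 2 1)} : Set (Option V)) {some (wv 4 0)}
      simp [Set.disjoint_left, hwne]
    · show Disjoint ({some (wv 1 0), some (wv 2 1)} : Set (Option V)) {some (wv 4 1)}
      simp [Set.disjoint_left, hwne]
    · show Disjoint ({some (wv 2 0)} : Set (Option V)) {none, some (wv 0 0)}
      simp [Set.disjoint_left, hwne]
    · show Disjoint ({some (wv 2 0)} : Set (Option V)) {some (wv 0 1)}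
      simp [Set.disjoint_left, hwne]
    · show Disjoint ({some (wv 2 0)} : Set (Option V)) {some (wv 1 0), some (wv 2 1)}
      simp [Set.disjoint_left, hwne]
    · exact absurd rfl hij
    · show Disjoint ({some (wv 2 0)} : Set (Option V)) {some (wv 1 1)}
      simp [Set.disjoint_left, hwne]
    · show Disjoint ({some (wv 2 0)} : Set (Option V)) {some (wv 3 0)}
      simp [Set.disjoint_left, hwne]
    · show Disjoint ({some (wv 2 0)} : Set (Option V)) {some (wv 3 1)}
      simp [Set.disjoint_left, hwne]
    · show Disjoint ({some (wv 2 0)} : Set (Option V)) {some (wv 4 0)}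
      simp [Set.disjoint_left, hwne]
    · show Disjoint ({some (wv 2 0)} : Set (Option V)) {some (wv 4 1)}
      simp [Set.disjoint_left, hwne]
    · show Disjoint ({some (wv 1 1)} : Set (Option V)) {none, some (wv 0 0)}
      simp [Set.disjoint_left, hwne]
    · show Disjoint ({some (wv 1 1)} : Set (Option V)) {some (wv 0 1)}
      simp [Set.disjoint_left, hwne]
    · show Disjoint ({some (wv 1 1)} : Set (Option V)) {some (wv 1 0), some (wv 2 1)}
      simp [Set.disjoint_left, hwne]
    · show Disjoint ({some (wv 1 1)} : Set (Option V)) {some (wv 2 0)}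
      simp [Set.disjoint_left, hwne]
    · exact absurd rfl hij
    · show Disjoint ({some (wv 1 1)} : Set (Option V)) {some (wv 3 0)}
      simp [Set.disjoint_left, hwne]
    · show Disjoint ({some (wv 1 1)} : Set (Option V)) {some (wv 3 1)}
      simp [Set.disjoint_left, hwne]
    · show Disjoint ({some (wv 1 1)} : Set (Option V)) {some (wv 4 0)}
      simp [Set.disjoint_left, hwne]
    · show Disjoint ({some (wv 1 1)} : Set (Option V)) {some (wv 4 1)}
      simp [Set.disjoint_left, hwne]
    · show Disjoint ({some (wv 3 0)} : Set (Option V)) {none, some (wv 0 0)}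
      simp [Set.disjoint_left, hwne]
    · show Disjoint ({some (wv 3 0)} : Set (Option V)) {some (wv 0 1)}
      simp [Set.disjoint_left, hwne]
    · show Disjoint ({some (wv 3 0)} : Set (Option V)) {some (wv 1 0), some (wv 2 1)}
      simp [Set.disjoint_left, hwne]
    · show Disjoint ({some (wv 3 0)} : Set (Option V)) {some (wv 2 0)}
      simp [Set.disjoint_left, hwne]
    · show Disjoint ({some (wv 3 0)} : Set (Option V)) {some (wv 1 1)}
      simp [Set.disjoint_left, hwne]
    · exact absurd rfl hij
    · show Disjoint ({some (wv 3 0)} : Set (Option V)) {some (wv 3 1)}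
      simp [Set.disjoint_left, hwne]
    · show Disjoint ({some (wv 3 0)} : Set (Option V)) {some (wv 4 0)}
      simp [Set.disjoint_left, hwne]
    · show Disjoint ({some (wv 3 0)} : Set (Option V)) {some (wv 4 1)}
      simp [Set.disjoint_left, hwne]
    · show Disjoint ({some (wv 3 1)} : Set (Option V)) {none, some (wv 0 0)}
      simp [Set.disjoint_left, hwne]
    · show Disjoint ({some (wv 3 1)} : Set (Option V)) {some (wv 0 1)}
      simp [Set.disjoint_left, hwne]
    · show Disjoint ({some (wv 3 1)} : Set (Option V)) {some (wv 1 0), some (wv 2 1)}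
      simp [Set.disjoint_left, hwne]
    · show Disjoint ({some (wv 3 1)} : Set (Option V)) {some (wv 2 0)}
      simp [Set.disjoint_left, hwne]
    · show Disjoint ({some (wv 3 1)} : Set (Option V)) {some (wv 1 1)}
      simp [Set.disjoint_left, hwne]
    · show Disjoint ({some (wv 3 1)} : Set (Option V)) {some (wv 3 0)}
      simp [Set.disjoint_left, hwne]
    · exact absurd rfl hij
    · show Disjoint ({some (wv 3 1)} : Set (Option V)) {some (wv 4 0)}
      simp [Set.disjoint_left, hwne]
    · show Disjoint ({some (wv 3 1)} : Set (Option V)) {some (wv 4 1)}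
      simp [Set.disjoint_left, hwne]
    · show Disjoint ({some (wv 4 0)} : Set (Option V)) {none, some (wv 0 0)}
      simp [Set.disjoint_left, hwne]
    · show Disjoint ({some (wv 4 0)} : Set (Option V)) {some (wv 0 1)}
      simp [Set.disjoint_left, hwne]
    · show Disjoint ({some (wv 4 0)} : Set (Option V)) {some (wv 1 0), some (wv 2 1)}
      simp [Set.disjoint_left, hwne]
    · show Disjoint ({some (wv 4 0)} : Set (Option V)) {some (wv 2 0)}
      simp [Set.disjoint_left, hwne]
    · show Disjoint ({some (wv 4 0)} : Set (Option V)) {some (wv 1 1)}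
      simp [Set.disjoint_left, hwne]
    · show Disjoint ({some (wv 4 0)} : Set (Option V)) {some (wv 3 0)}
      simp [Set.disjoint_left, hwne]
    · show Disjoint ({some (wv 4 0)} : Set (Option V)) {some (wv 3 1)}
      simp [Set.disjoint_left, hwne]
    · exact absurd rfl hij
    · show Disjoint ({some (wv 4 0)} : Set (Option V)) {some (wv 4 1)}
      simp [Set.disjoint_left, hwne]
    · show Disjoint ({some (wv 4 1)} : Set (Option V)) {none, some (wv 0 0)}
      simp [Set.disjoint_left, hwne]
    · show Disjoint ({some (wv 4 1)} : Set (Option V)) {some (wv 0 1)}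
      simp [Set.disjoint_left, hwne]
    · show Disjoint ({some (wv 4 1)} : Set (Option V)) {some (wv 1 0), some (wv 2 1)}
      simp [Set.disjoint_left, hwne]
    · show Disjoint ({some (wv 4 1)} : Set (Option V)) {some (wv 2 0)}
      simp [Set.disjoint_left, hwne]
    · show Disjoint ({some (wv 4 1)} : Set (Option V)) {some (wv 1 1)}
      simp [Set.disjoint_left, hwne]
    · show Disjoint ({some (wv 4 1)} : Set (Option V)) {some (wv 3 0)}
      simp [Set.disjoint_left, hwne]
    · show Disjoint ({some (wv 4 1)} : Set (Option V)) {some (wv 3 1)}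
      simp [Set.disjoint_left, hwne]
    · show Disjoint ({some (wv 4 1)} : Set (Option V)) {some (wv 4 0)}
      simp [Set.disjoint_left, hwne]
    · exact absurd rfl hij
  · intro a b hab
    simp only [SimpleGraph.deleteEdges_adj, top_adj, Set.mem_insert_iff,
      Set.mem_singleton_iff, not_or] at hab
    obtain ⟨hne, hm1, hm2⟩ := hab
    fin_cases a <;> fin_cases b
    · exact absurd rfl hne
    · exact ⟨none, Set.mem_insert _ _, some (wv 0 1), rfl, addVertex_adj_none_some.mpr hw01⟩
    · exact ⟨some (wv 0 0), Set.mem_insert_of_mem _ rfl, some (wv 1 0), Set.mem_insert _ _, addVertex_adj_some_some.mpr ((hwadj 0 0 1 0).mpr (by decide))⟩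
    · exact ⟨some (wv 0 0), Set.mem_insert_of_mem _ rfl, some (wv 2 0), rfl, addVertex_adj_some_some.mpr ((hwadj 0 0 2 0).mpr (by decide))⟩
    · exact ⟨some (wv 0 0), Set.mem_insert_of_mem _ rfl, some (wv 1 1), rfl, addVertex_adj_some_some.mpr ((hwadj 0 0 1 1).mpr (by decide))⟩
    · exact ⟨some (wv 0 0), Set.mem_insert_of_mem _ rfl, some (wv 3 0), rfl, addVertex_adj_some_some.mpr ((hwadj 0 0 3 0).mpr (by decide))⟩
    · exact ⟨some (wv 0 0), Set.mem_insert_of_mem _ rfl, some (wv 3 1), rfl, addVertex_adj_some_some.mpr ((hwadj 0 0 3 1).mpr (by decide))⟩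
    · exact ⟨some (wv 0 0), Set.mem_insert_of_mem _ rfl, some (wv 4 0), rfl, addVertex_adj_some_some.mpr ((hwadj 0 0 4 0).mpr (by decide))⟩
    · exact ⟨some (wv 0 0), Set.mem_insert_of_mem _ rfl, some (wv 4 1), rfl, addVertex_adj_some_some.mpr ((hwadj 0 0 4 1).mpr (by decide))⟩
    · exact ⟨some (wv 0 1), rfl, none, Set.mem_insert _ _, addVertex_adj_some_none.mpr hw01⟩
    · exact absurd rfl hne
    · exact ⟨some (wv 0 1), rfl, some (wv 1 0), Set.mem_insert _ _, addVertex_adj_some_some.mpr ((hwadj 0 1 1 0).mpr (by decide))⟩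
    · exact ⟨some (wv 0 1), rfl, some (wv 2 0), rfl, addVertex_adj_some_some.mpr ((hwadj 0 1 2 0).mpr (by decide))⟩
    · exact ⟨some (wv 0 1), rfl, some (wv 1 1), rfl, addVertex_adj_some_some.mpr ((hwadj 0 1 1 1).mpr (by decide))⟩
    · exact ⟨some (wv 0 1), rfl, some (wv 3 0), rfl, addVertex_adj_some_some.mpr ((hwadj 0 1 3 0).mpr (by decide))⟩
    · exact ⟨some (wv 0 1), rfl, some (wv 3 1), rfl, addVertex_adj_some_some.mpr ((hwadj 0 1 3 1).mpr (by decide))⟩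
    · exact ⟨some (wv 0 1), rfl, some (wv 4 0), rfl, addVertex_adj_some_some.mpr ((hwadj 0 1 4 0).mpr (by decide))⟩
    · exact ⟨some (wv 0 1), rfl, some (wv 4 1), rfl, addVertex_adj_some_some.mpr ((hwadj 0 1 4 1).mpr (by decide))⟩
    · exact ⟨some (wv 1 0), Set.mem_insert _ _, some (wv 0 0), Set.mem_insert_of_mem _ rfl, addVertex_adj_some_some.mpr ((hwadj 1 0 0 0).mpr (by decide))⟩
    · exact ⟨some (wv 1 0), Set.mem_insert _ _, some (wv 0 1), rfl, addVertex_adj_some_some.mpr ((hwadj 1 0 0 1).mpr (by decide))⟩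
    · exact absurd rfl hne
    · exact ⟨some (wv 1 0), Set.mem_insert _ _, some (wv 2 0), rfl, addVertex_adj_some_some.mpr ((hwadj 1 0 2 0).mpr (by decide))⟩
    · exact ⟨some (wv 2 1), Set.mem_insert_of_mem _ rfl, some (wv 1 1), rfl, addVertex_adj_some_some.mpr ((hwadj 2 1 1 1).mpr (by decide))⟩
    · exact ⟨some (wv 1 0), Set.mem_insert _ _, some (wv 3 0), rfl, addVertex_adj_some_some.mpr ((hwadj 1 0 3 0).mpr (by decide))⟩
    · exact ⟨some (wv 1 0), Set.mem_insert _ _, some (wv 3 1), rfl, addVertex_adj_some_some.mpr ((hwadj 1 0 3 1).mpr (by decide))⟩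
    · exact ⟨some (wv 1 0), Set.mem_insert _ _, some (wv 4 0), rfl, addVertex_adj_some_some.mpr ((hwadj 1 0 4 0).mpr (by decide))⟩
    · exact ⟨some (wv 1 0), Set.mem_insert _ _, some (wv 4 1), rfl, addVertex_adj_some_some.mpr ((hwadj 1 0 4 1).mpr (by decide))⟩
    · exact ⟨some (wv 2 0), rfl, some (wv 0 0), Set.mem_insert_of_mem _ rfl, addVertex_adj_some_some.mpr ((hwadj 2 0 0 0).mpr (by decide))⟩
    · exact ⟨some (wv 2 0), rfl, some (wv 0 1), rfl, addVertex_adj_some_some.mpr ((hwadj 2 0 0 1).mpr (by decide))⟩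
    · exact ⟨some (wv 2 0), rfl, some (wv 1 0), Set.mem_insert _ _, addVertex_adj_some_some.mpr ((hwadj 2 0 1 0).mpr (by decide))⟩
    · exact absurd rfl hne
    · exact ⟨some (wv 2 0), rfl, some (wv 1 1), rfl, addVertex_adj_some_some.mpr ((hwadj 2 0 1 1).mpr (by decide))⟩
    · exact ⟨some (wv 2 0), rfl, some (wv 3 0), rfl, addVertex_adj_some_some.mpr ((hwadj 2 0 3 0).mpr (by decide))⟩
    · exact ⟨some (wv 2 0), rfl, some (wv 3 1), rfl, addVertex_adj_some_some.mpr ((hwadj 2 0 3 1).mpr (by decide))⟩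
    · exact ⟨some (wv 2 0), rfl, some (wv 4 0), rfl, addVertex_adj_some_some.mpr ((hwadj 2 0 4 0).mpr (by decide))⟩
    · exact ⟨some (wv 2 0), rfl, some (wv 4 1), rfl, addVertex_adj_some_some.mpr ((hwadj 2 0 4 1).mpr (by decide))⟩
    · exact ⟨some (wv 1 1), rfl, some (wv 0 0), Set.mem_insert_of_mem _ rfl, addVertex_adj_some_some.mpr ((hwadj 1 1 0 0).mpr (by decide))⟩
    · exact ⟨some (wv 1 1), rfl, some (wv 0 1), rfl, addVertex_adj_some_some.mpr ((hwadj 1 1 0 1).mpr (by decide))⟩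
    · exact ⟨some (wv 1 1), rfl, some (wv 2 1), Set.mem_insert_of_mem _ rfl, addVertex_adj_some_some.mpr ((hwadj 1 1 2 1).mpr (by decide))⟩
    · exact ⟨some (wv 1 1), rfl, some (wv 2 0), rfl, addVertex_adj_some_some.mpr ((hwadj 1 1 2 0).mpr (by decide))⟩
    · exact absurd rfl hne
    · exact ⟨some (wv 1 1), rfl, some (wv 3 0), rfl, addVertex_adj_some_some.mpr ((hwadj 1 1 3 0).mpr (by decide))⟩
    · exact ⟨some (wv 1 1), rfl, some (wv 3 1), rfl, addVertex_adj_some_some.mpr ((hwadj 1 1 3 1).mpr (by decide))⟩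
    · exact ⟨some (wv 1 1), rfl, some (wv 4 0), rfl, addVertex_adj_some_some.mpr ((hwadj 1 1 4 0).mpr (by decide))⟩
    · exact ⟨some (wv 1 1), rfl, some (wv 4 1), rfl, addVertex_adj_some_some.mpr ((hwadj 1 1 4 1).mpr (by decide))⟩
    · exact ⟨some (wv 3 0), rfl, some (wv 0 0), Set.mem_insert_of_mem _ rfl, addVertex_adj_some_some.mpr ((hwadj 3 0 0 0).mpr (by decide))⟩
    · exact ⟨some (wv 3 0), rfl, some (wv 0 1), rfl, addVertex_adj_some_some.mpr ((hwadj 3 0 0 1).mpr (by decide))⟩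
    · exact ⟨some (wv 3 0), rfl, some (wv 1 0), Set.mem_insert _ _, addVertex_adj_some_some.mpr ((hwadj 3 0 1 0).mpr (by decide))⟩
    · exact ⟨some (wv 3 0), rfl, some (wv 2 0), rfl, addVertex_adj_some_some.mpr ((hwadj 3 0 2 0).mpr (by decide))⟩
    · exact ⟨some (wv 3 0), rfl, some (wv 1 1), rfl, addVertex_adj_some_some.mpr ((hwadj 3 0 1 1).mpr (by decide))⟩
    · exact absurd rfl hne
    · exact absurd (by decide) hm1
    · exact ⟨some (wv 3 0), rfl, some (wv 4 0), rfl, addVertex_adj_some_some.mpr ((hwadj 3 0 4 0).mpr (by decide))⟩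
    · exact ⟨some (wv 3 0), rfl, some (wv 4 1), rfl, addVertex_adj_some_some.mpr ((hwadj 3 0 4 1).mpr (by decide))⟩
    · exact ⟨some (wv 3 1), rfl, some (wv 0 0), Set.mem_insert_of_mem _ rfl, addVertex_adj_some_some.mpr ((hwadj 3 1 0 0).mpr (by decide))⟩
    · exact ⟨some (wv 3 1), rfl, some (wv 0 1), rfl, addVertex_adj_some_some.mpr ((hwadj 3 1 0 1).mpr (by decide))⟩
    · exact ⟨some (wv 3 1), rfl, some (wv 1 0), Set.mem_insert _ _, addVertex_adj_some_some.mpr ((hwadj 3 1 1 0).mpr (by decide))⟩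
    · exact ⟨some (wv 3 1), rfl, some (wv 2 0), rfl, addVertex_adj_some_some.mpr ((hwadj 3 1 2 0).mpr (by decide))⟩
    · exact ⟨some (wv 3 1), rfl, some (wv 1 1), rfl, addVertex_adj_some_some.mpr ((hwadj 3 1 1 1).mpr (by decide))⟩
    · exact absurd (by decide) hm1
    · exact absurd rfl hne
    · exact ⟨some (wv 3 1), rfl, some (wv 4 0), rfl, addVertex_adj_some_some.mpr ((hwadj 3 1 4 0).mpr (by decide))⟩
    · exact ⟨some (wv 3 1), rfl, some (wv 4 1), rfl, addVertex_adj_some_some.mpr ((hwadj 3 1 4 1).mpr (by decide))⟩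
    · exact ⟨some (wv 4 0), rfl, some (wv 0 0), Set.mem_insert_of_mem _ rfl, addVertex_adj_some_some.mpr ((hwadj 4 0 0 0).mpr (by decide))⟩
    · exact ⟨some (wv 4 0), rfl, some (wv 0 1), rfl, addVertex_adj_some_some.mpr ((hwadj 4 0 0 1).mpr (by decide))⟩
    · exact ⟨some (wv 4 0), rfl, some (wv 1 0), Set.mem_insert _ _, addVertex_adj_some_some.mpr ((hwadj 4 0 1 0).mpr (by decide))⟩
    · exact ⟨some (wv 4 0), rfl, some (wv 2 0), rfl, addVertex_adj_some_some.mpr ((hwadj 4 0 2 0).mpr (by decide))⟩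
    · exact ⟨some (wv 4 0), rfl, some (wv 1 1), rfl, addVertex_adj_some_some.mpr ((hwadj 4 0 1 1).mpr (by decide))⟩
    · exact ⟨some (wv 4 0), rfl, some (wv 3 0), rfl, addVertex_adj_some_some.mpr ((hwadj 4 0 3 0).mpr (by decide))⟩
    · exact ⟨some (wv 4 0), rfl, some (wv 3 1), rfl, addVertex_adj_some_some.mpr ((hwadj 4 0 3 1).mpr (by decide))⟩
    · exact absurd rfl hne
    · exact absurd (by decide) hm2
    · exact ⟨some (wv 4 1), rfl, some (wv 0 0), Set.mem_insert_of_mem _ rfl, addVertex_adj_some_some.mpr ((hwadj 4 1 0 0).mpr (by decide))⟩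
    · exact ⟨some (wv 4 1), rfl, some (wv 0 1), rfl, addVertex_adj_some_some.mpr ((hwadj 4 1 0 1).mpr (by decide))⟩
    · exact ⟨some (wv 4 1), rfl, some (wv 1 0), Set.mem_insert _ _, addVertex_adj_some_some.mpr ((hwadj 4 1 1 0).mpr (by decide))⟩
    · exact ⟨some (wv 4 1), rfl, some (wv 2 0), rfl, addVertex_adj_some_some.mpr ((hwadj 4 1 2 0).mpr (by decide))⟩
    · exact ⟨some (wv 4 1), rfl, some (wv 1 1), rfl, addVertex_adj_some_some.mpr ((hwadj 4 1 1 1).mpr (by decide))⟩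
    · exact ⟨some (wv 4 1), rfl, some (wv 3 0), rfl, addVertex_adj_some_some.mpr ((hwadj 4 1 3 0).mpr (by decide))⟩
    · exact ⟨some (wv 4 1), rfl, some (wv 3 1), rfl, addVertex_adj_some_some.mpr ((hwadj 4 1 3 1).mpr (by decide))⟩
    · exact absurd (by decide) hm2
    · exact absurd rfl hne

end Infra

theorem cockade_add_vertex {V : Type} (G' : SimpleGraph V) (h : Cockade85 G')
    (N : Set V) (hN : 6 ≤ N.ncard) :
    HasKEqMinor 9 (addVertex G' N) := by
  induction h with
  | @base₁ V' G hiso =>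
    obtain ⟨φ⟩ := hiso
    exact k8_case φ N hN
  | @base₂ V' G hiso =>
    obtain ⟨φ⟩ := hiso
    exact k22222_case φ N hN
  | @glue V' G A B hun hab hba hcard hclq hnoadj hA hB ihA ihB =>
    have : Finite ↥A := cockade_finite hA
    have : Finite ↥B := cockade_finite hB
    have hfin : Finite V' := by
      rw [← Set.finite_univ_iff, ← hun]
      exact (Set.toFinite A).union (Set.toFinite B)
    -- if all neighbours lie on one side, use the inductive hypothesis directly
    have sideways : ∀ (D : Set V'), N ⊆ D →
        (∀ N' : Set ↥D, 6 ≤ N'.ncard → HasKEqMinor 9 (addVertex (G.induce D) N')) →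
        HasKEqMinor 9 (addVertex G N) := by
      intro D hND ihD
      have h6 : 6 ≤ (Subtype.val ⁻¹' N : Set ↥D).ncard := by
        rw [ncard_preimage_val D N hND]; exact hN
      refine (ihD _ h6).of_minor ?_
      refine isMinorOf_of_injHom (Option.map Subtype.val)
        (Option.map_injective Subtype.coe_injective) ?_
      rintro (_ | a) (_ | b) hadj
      · exact absurd hadj (by simp)
      · exact hadj
      · exact hadj
      · exact hadj
    by_cases hNA : N ⊆ A
    · exact sideways A hNA ihA
    by_cases hNB : N ⊆ B
    · exact sideways B hNB ihB
    -- the routing case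
    obtain ⟨a₀, ha₀N, ha₀B⟩ := Set.not_subset.mp hNB
    have ha₀A : a₀ ∈ A := (hun ▸ Set.mem_univ a₀ : a₀ ∈ A ∪ B).resolve_right ha₀B
    obtain ⟨w, hwN, hwA⟩ := Set.not_subset.mp hNA
    have hwB : w ∈ B := (hun ▸ Set.mem_univ w : w ∈ A ∪ B).resolve_left hwA
    -- route from w inside B to get neighbours at every vertex of the clique A ∩ B
    have hCB : (G.induce B).IsClique (Subtype.val ⁻¹' (A ∩ B)) := clique_preimage B hclq
    have hCBcard : (Subtype.val ⁻¹' (A ∩ B) : Set ↥B).ncard = 5 := by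
      rw [ncard_preimage_val B _ Set.inter_subset_right]; exact hcard
    obtain ⟨X', hwX', hXC', hXc', hXadj'⟩ := cockade_route hB _ hCB hCBcard ⟨w, hwB⟩
      (fun hmem => hwA hmem.1)
    set X : Set V' := Subtype.val '' X' with hX
    have hwX : w ∈ X := ⟨⟨w, hwB⟩, hwX', rfl⟩
    have hXA : ∀ v ∈ X, v ∉ A := by
      rintro v ⟨⟨v', hv'⟩, hvX', rfl⟩ hvA
      have : (⟨v', hv'⟩ : ↥B) ∈ X' ∩ (Subtype.val ⁻¹' (A ∩ B)) := ⟨hvX', hvA, hv'⟩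
      rw [hXC'] at this
      exact this
    have hXconn : (G.induce X).Connected :=
      connected_image Subtype.val (fun a _ b _ h => h) hXc'
    have hXCadj : ∀ c ∈ A ∩ B, ∃ x ∈ X, G.Adj x c := by
      intro c hc
      obtain ⟨x', hx', hadjx⟩ := hXadj' ⟨c, hc.2⟩ hc
      exact ⟨x'.1, ⟨x', hx', rfl⟩, hadjx⟩
    -- apply the inductive hypothesis on side A with the clique added to the neighbours
    set M : Set V' := (N ∩ A) ∪ (A ∩ B) with hM
    have hMA : M ⊆ A := Set.union_subset Set.inter_subset_right Set.inter_subset_left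
    have hM6 : 6 ≤ M.ncard := by
      have h1 : insert a₀ (A ∩ B) ⊆ M := by
        refine Set.insert_subset (Or.inl ⟨ha₀N, ha₀A⟩) Set.subset_union_right
      have h2 : (insert a₀ (A ∩ B)).ncard = 6 := by
        rw [Set.ncard_insert_of_notMem (fun h => ha₀B h.2) (Set.toFinite _), hcard]
      have h3 := Set.ncard_le_ncard h1 (Set.toFinite M)
      omega
    have hIH := ihA (Subtype.val ⁻¹' M) (by rw [ncard_preimage_val A M hMA]; exact hM6)
    refine hIH.of_minor ?_
    -- the bridge minor
    refine ⟨fun o => Option.rec ({none} ∪ some '' X) (fun a => {some a.1}) o, ?_, ?_, ?_, ?_⟩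
    · rintro (_ | a)
      · exact ⟨none, Or.inl rfl⟩
      · exact ⟨some a.1, rfl⟩
    · rintro (_ | a)
      · show ((addVertex G N).induce ({none} ∪ some '' X)).Connected
        have hset : ({none} ∪ some '' X : Set (Option V')) =
            ({none, some w} : Set (Option V')) ∪ some '' X := by
          apply Set.Subset.antisymm
          · rintro z (rfl | hz)
            · exact Or.inl (Or.inl rfl)
            · exact Or.inr hz
          · rintro z ((rfl | rfl) | hz)
            · exact Or.inl rfl
            · exact Or.inr ⟨w, hwX, rfl⟩
            · exact Or.inr hz
        rw [hset]
        refine SimpleGraph.induce_union_connected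
          (SimpleGraph.induce_pair_connected_of_adj (addVertex_adj_none_some.mpr hwN)).preconnected
          (connected_image some (fun a _ b _ h => h) hXconn).preconnected
          ⟨some w, Or.inr rfl, ⟨w, hwX, rfl⟩⟩
      · exact induce_singleton_connected _ _
    · rintro (_ | a) (_ | b) hne
      · exact absurd rfl hne
      · rw [Set.disjoint_right]
        rintro z rfl (h | ⟨x, hxX, hxz⟩)
        · simp at h
        · exact hXA x hxX (Option.some_injective _ hxz ▸ b.2)
      · rw [Set.disjoint_left]
        rintro z rfl (h | ⟨x, hxX, hxz⟩)
        · simp at h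
        · exact hXA x hxX (Option.some_injective _ hxz ▸ a.2)
      · simp only [Set.disjoint_singleton_left, Set.mem_singleton_iff, Option.some.injEq]
        exact fun h => hne (congrArg some (Subtype.ext h))
    · rintro (_ | a) (_ | b) hadj
      · exact absurd hadj (by simp)
      · -- none ~ some b, so b.1 ∈ M
        have hbM : b.1 ∈ M := hadj
        rcases hbM with hb1 | hb2
        · exact ⟨none, Or.inl rfl, some b.1, rfl, addVertex_adj_none_some.mpr hb1.1⟩
        · obtain ⟨x, hxX, hadjx⟩ := hXCadj b.1 hb2
          exact ⟨some x, Or.inr ⟨x, hxX, rfl⟩, some b.1, rfl,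
            addVertex_adj_some_some.mpr hadjx⟩
      · have haM : a.1 ∈ M := hadj
        rcases haM with ha1 | ha2
        · exact ⟨some a.1, rfl, none, Or.inl rfl, addVertex_adj_some_none.mpr ha1.1⟩
        · obtain ⟨x, hxX, hadjx⟩ := hXCadj a.1 ha2
          exact ⟨some a.1, rfl, some x, Or.inr ⟨x, hxX, rfl⟩,
            addVertex_adj_some_some.mpr hadjx.symm⟩
      · exact ⟨some a.1, rfl, some b.1, rfl, addVertex_adj_some_some.mpr hadj⟩
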